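/- arXiv:1801.08345 — 3 statements merged into one kernel-verified Lean document; each statement's English description precedes it below -/
import Mathlib

section
/- For integers k ≥ 2 and n ≥ k+1 with n·k even, there exists a connected k-regular simple graph on n vertices. -/
open SimpleGraph Finset
open scoped Fin.NatCast Fin.CommRing

/-- Generic lemma: a symmetric jump set not containing 0 gives a circulant graph
whose neighbor sets all have size `T.ncard`, and if 1 ∈ T it's connected. -/
lemma circulant_aux {N : ℕ} (T : Set (Fin (N + 1))) (h0 : (0 : Fin (N+1)) ∉ T)
    (hsym : ∀ x ∈ T, -x ∈ T) (h1 : (1 : Fin (N+1)) ∈ T) :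
    (circulantGraph T).Connected ∧ ∀ v, ((circulantGraph T).neighborSet v).ncard = T.ncard := by
  have hadj : ∀ u v : Fin (N+1), (circulantGraph T).Adj u v ↔ v - u ∈ T := by
    intro u v
    simp only [circulantGraph_adj]
    constructor
    · rintro ⟨hne, h | h⟩
      · have := hsym _ h; simpa using this
      · exact h
    · intro h
      refine ⟨fun he => ?_, Or.inr h⟩
      subst he; simp at h; exact h0 h
  constructor
  · have hle : circulantGraph ({1} : Set (Fin (N+1))) ≤ circulantGraph T := by
      intro u v hv
      rw [circulantGraph_adj] at hv
      rw [hadj]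
      rcases hv with ⟨hne, h | h⟩
      · simp only [Set.mem_singleton_iff] at h
        have : u - v ∈ T := h ▸ h1
        have := hsym _ this
        simpa using this
      · simp only [Set.mem_singleton_iff] at h
        exact h ▸ h1
    have hc : (cycleGraph (N + 1)).Connected := cycleGraph_connected
    have : cycleGraph (N + 1) = circulantGraph ({1} : Set (Fin (N+1))) :=
      cycleGraph_eq_circulantGraph N
    rw [this] at hc
    exact hc.mono hle
  · intro v
    have : (circulantGraph T).neighborSet v = (fun t => t + v) '' T := by
      ext w
      simp only [mem_neighborSet, hadj, Set.mem_image]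
      constructor
      · intro h; exact ⟨w - v, h, by ring⟩
      · rintro ⟨t, ht, rfl⟩; simpa using ht
    rw [this, Set.ncard_image_of_injective _ (add_left_injective v)]

theorem exists_connected_regular (k n : ℕ) (hk : 2 ≤ k) (hn : k + 1 ≤ n)
    (hpar : Even (n * k)) :
    ∃ G : SimpleGraph (Fin n), G.Connected ∧ ∀ v, (G.neighborSet v).ncard = k := by
  obtain ⟨N, rfl⟩ : ∃ N, n = N + 1 := ⟨n - 1, by omega⟩
  set m := k / 2 with hm
  have hm1 : 1 ≤ m := by omega
  have h2m : 2 * m < N + 1 := by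
    rcases Nat.even_or_odd k with h | h
    · have := Nat.even_iff.mp h; omega
    · have := Nat.odd_iff.mp h; omega
  have hodd : Odd k → Even (N + 1) := by
    intro h
    rcases Nat.even_or_odd (N + 1) with h' | h'
    · exact h'
    · have h1 := Nat.odd_iff.mp (h'.mul h)
      have h2 := Nat.even_iff.mp hpar
      omega
  set S : Finset ℕ :=
    (Finset.Icc 1 m ∪ Finset.Icc (N + 1 - m) N) ∪ (if Odd k then {(N + 1) / 2} else ∅)
    with hS
  -- membership facts
  have hmem : ∀ i ∈ S, 1 ≤ i ∧ i ≤ N := by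
    intro i hi
    simp only [hS, Finset.mem_union, Finset.mem_Icc] at hi
    rcases hi with (h | h) | h
    · omega
    · omega
    · by_cases hko : Odd k
      · simp [hko] at h
        have := hodd hko
        rw [Nat.even_iff] at this
        omega
      · simp [hko] at h
  -- card of S
  have hcard : S.card = k := by
    have hd1 : Disjoint (Finset.Icc 1 m) (Finset.Icc (N + 1 - m) N) := by
      rw [Finset.disjoint_left]
      intro a ha hb
      simp only [Finset.mem_Icc] at ha hb
      omega
    have hc1 : (Finset.Icc 1 m ∪ Finset.Icc (N + 1 - m) N).card = 2 * m := by
      rw [Finset.card_union_of_disjoint hd1, Nat.card_Icc, Nat.card_Icc]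
      omega
    by_cases hko : Odd k
    · have hne : Even (N + 1) := hodd hko
      rw [Nat.even_iff] at hne
      have hd2 : Disjoint (Finset.Icc 1 m ∪ Finset.Icc (N + 1 - m) N)
          ({(N + 1) / 2} : Finset ℕ) := by
        rw [Finset.disjoint_left]
        intro a ha hb
        simp only [Finset.mem_union, Finset.mem_Icc] at ha
        simp only [Finset.mem_singleton] at hb
        rcases Nat.odd_iff.mp hko with hk1
        have : k = 2 * m + 1 := by omega
        omega
      rw [hS, if_pos hko, Finset.card_union_of_disjoint hd2, hc1,
        Finset.card_singleton]
      rcases Nat.odd_iff.mp hko with hk1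
      omega
    · rw [hS, if_neg hko]
      simp only [Finset.union_empty]
      rw [hc1]
      have := Nat.even_iff.mp (Nat.not_odd_iff_even.mp hko)
      omega
  -- the jump set in Fin (N+1)
  set T : Set (Fin (N + 1)) := ↑(S.image (fun i : ℕ => (i : Fin (N + 1)))) with hT
  have hval : ∀ i ∈ S, ((i : Fin (N + 1)) : ℕ) = i := by
    intro i hi
    exact Fin.val_cast_of_lt (by have := hmem i hi; omega)
  have hTcard : T.ncard = k := by
    rw [hT, Set.ncard_coe_finset, Finset.card_image_of_injOn, hcard]
    intro a ha b hb hab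
    have hv : ((a : Fin (N + 1)) : ℕ) = ((b : Fin (N + 1)) : ℕ) := congrArg Fin.val hab
    rwa [hval a ha, hval b hb] at hv
  have h0 : (0 : Fin (N + 1)) ∉ T := by
    rw [hT]
    simp only [Finset.coe_image, Set.mem_image, Finset.mem_coe]
    rintro ⟨i, hi, hi0⟩
    have hv := hval i hi
    have hmm := hmem i hi
    rw [hi0] at hv
    simp at hv
    omega
  have hnegnat : ∀ i ∈ S, (N + 1 - i) ∈ S := by
    intro i hi
    have him := hmem i hi
    simp only [hS, Finset.mem_union, Finset.mem_Icc] at hi ⊢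
    rcases hi with (h | h) | h
    · left; right; omega
    · left; left; omega
    · by_cases hko : Odd k
      · simp only [if_pos hko, Finset.mem_singleton] at h ⊢
        right
        have := Nat.even_iff.mp (hodd hko)
        omega
      · simp [hko] at h
  have hneg : ∀ i ∈ S, -((i : Fin (N+1))) = ((N + 1 - i : ℕ) : Fin (N + 1)) := by
    intro i hi
    have him := hmem i hi
    apply neg_eq_of_add_eq_zero_right
    rw [← Nat.cast_add]
    have : i + (N + 1 - i) = N + 1 := by omega
    rw [this]
    simp
  have hsym : ∀ x ∈ T, -x ∈ T := by
    rw [hT]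
    simp only [Finset.coe_image, Set.mem_image, Finset.mem_coe]
    rintro x ⟨i, hi, rfl⟩
    exact ⟨N + 1 - i, hnegnat i hi, (hneg i hi).symm⟩
  have h1 : (1 : Fin (N + 1)) ∈ T := by
    rw [hT]
    simp only [Finset.coe_image, Set.mem_image, Finset.mem_coe]
    exact ⟨1, by simp [hS, Finset.mem_union, Finset.mem_Icc]; omega, by simp⟩
  obtain ⟨hc, hreg⟩ := circulant_aux T h0 hsym h1
  exact ⟨circulantGraph T, hc, fun v => (hreg v).trans hTcard⟩
end

section
/- Let k ≥ 2 be even and let G be a connected k-regular simple graph on vertex set {1,...,n}. Suppose e_1,...,e_{k/2} are pairwise vertex-disjoint edges of G all lying on a common path of G. Then the graph obtained from G by deleting the edges e_1,...,e_{k/2} and joining a new vertex n+1 to all k endpoints of these edges is a connected k-regular simple graph on n+1 vertices. -/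
/-- The graph on `Fin (n+1)` obtained from `G` on `Fin n` by deleting the edges in `s`
and joining the new vertex `Fin.last n` to every endpoint of an edge of `s`. -/
def extendByOne (n : ℕ) (G : SimpleGraph (Fin n)) (s : Finset (Sym2 (Fin n))) :
    SimpleGraph (Fin (n + 1)) :=
  SimpleGraph.fromRel (fun x y =>
    (∃ x' y' : Fin n, x = x'.castSucc ∧ y = y'.castSucc ∧ G.Adj x' y' ∧ s(x', y') ∉ s)
    ∨ (x = Fin.last n ∧ ∃ y' : Fin n, y = y'.castSucc ∧ ∃ e ∈ s, y' ∈ e))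

namespace ExtAux

variable {n : ℕ} {G : SimpleGraph (Fin n)} {s : Finset (Sym2 (Fin n))}

lemma castSucc_ne_last (a : Fin n) : a.castSucc ≠ Fin.last n :=
  Fin.ne_last_of_lt (Fin.castSucc_lt_last a)

lemma adj_castSucc {a b : Fin n} :
    (extendByOne n G s).Adj a.castSucc b.castSucc ↔ G.Adj a b ∧ s(a, b) ∉ s := by
  rw [extendByOne, SimpleGraph.fromRel_adj]
  constructor
  · rintro ⟨hne, h | h⟩
    · rcases h with ⟨x', y', hx, hy, hadj, hs⟩ | ⟨hlast, -⟩
      · rw [Fin.castSucc_inj] at hx hy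
        subst hx; subst hy; exact ⟨hadj, hs⟩
      · exact absurd hlast (castSucc_ne_last a)
    · rcases h with ⟨x', y', hx, hy, hadj, hs⟩ | ⟨hlast, -⟩
      · rw [Fin.castSucc_inj] at hx hy
        subst hx; subst hy
        exact ⟨hadj.symm, by rwa [Sym2.eq_swap]⟩
      · exact absurd hlast (castSucc_ne_last b)
  · rintro ⟨hadj, hs⟩
    exact ⟨by simpa [Fin.castSucc_inj] using hadj.ne,
      Or.inl (Or.inl ⟨a, b, rfl, rfl, hadj, hs⟩)⟩

lemma adj_last {b : Fin n} :
    (extendByOne n G s).Adj (Fin.last n) b.castSucc ↔ ∃ e ∈ s, b ∈ e := by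
  rw [extendByOne, SimpleGraph.fromRel_adj]
  constructor
  · rintro ⟨hne, h | h⟩
    · rcases h with ⟨x', y', hx, -, -, -⟩ | ⟨-, y', hy, e, he, hmem⟩
      · exact absurd hx.symm (castSucc_ne_last x')
      · rw [Fin.castSucc_inj] at hy; subst hy; exact ⟨e, he, hmem⟩
    · rcases h with ⟨x', y', -, hy, -, -⟩ | ⟨hlast, -⟩
      · exact absurd hy.symm (castSucc_ne_last y')
      · exact absurd hlast (castSucc_ne_last b)
  · rintro ⟨e, he, hmem⟩
    exact ⟨(castSucc_ne_last b).symm, Or.inl (Or.inr ⟨rfl, b, rfl, e, he, hmem⟩)⟩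

end ExtAux

open ExtAux in
theorem extendByOne_connected_regular (n k : ℕ) (hk : Even k) (hk2 : 2 ≤ k)
    (G : SimpleGraph (Fin n)) (hc : G.Connected)
    (hreg : ∀ v, (G.neighborSet v).ncard = k)
    (s : Finset (Sym2 (Fin n))) (hcard : s.card = k / 2)
    (hsub : ∀ e ∈ s, e ∈ G.edgeSet)
    (hdisj : ∀ e ∈ s, ∀ f ∈ s, e ≠ f → ∀ x : Fin n, x ∈ e → x ∉ f)
    (hpath : ∃ (u v : Fin n) (p : G.Walk u v), p.IsPath ∧ ∀ e ∈ s, e ∈ p.edges) :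
    (extendByOne n G s).Connected ∧
      ∀ v, ((extendByOne n G s).neighborSet v).ncard = k := by
  obtain ⟨m, rfl⟩ := hk
  set H := extendByOne n G s with hH
  -- s is nonempty
  have hkpos : 1 ≤ (m + m) / 2 := by omega
  have hsne : s.Nonempty := Finset.card_pos.mp (by omega)
  -- adjacent vertices in G are reachable in H
  have hadjreach : ∀ a b : Fin n, G.Adj a b →
      H.Reachable a.castSucc b.castSucc := by
    intro a b hab
    by_cases hmem : s(a, b) ∈ s
    · have h1 : H.Adj (Fin.last n) a.castSucc := adj_last.mpr ⟨s(a, b), hmem, by simp⟩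
      have h2 : H.Adj (Fin.last n) b.castSucc := adj_last.mpr ⟨s(a, b), hmem, by simp⟩
      exact (h1.symm.reachable).trans h2.reachable
    · exact (adj_castSucc.mpr ⟨hab, hmem⟩).reachable
  have hreach : ∀ a b : Fin n, H.Reachable a.castSucc b.castSucc := by
    intro a b
    obtain ⟨w⟩ := hc.preconnected a b
    induction w with
    | nil => exact SimpleGraph.Reachable.refl _
    | cons h p ih => exact (hadjreach _ _ h).trans ih
  have hlastreach : ∃ a : Fin n, H.Reachable (Fin.last n) a.castSucc := by
    obtain ⟨e, he⟩ := hsne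
    induction e using Sym2.ind with
    | _ a b => exact ⟨a, (adj_last.mpr ⟨s(a, b), he, by simp⟩).reachable⟩
  have hconn : H.Connected := by
    rw [SimpleGraph.connected_iff]
    refine ⟨?_, ⟨Fin.last n⟩⟩
    intro x y
    obtain ⟨a, ha⟩ := hlastreach
    induction x using Fin.lastCases with
    | last =>
      induction y using Fin.lastCases with
      | last => exact SimpleGraph.Reachable.refl _
      | cast y => exact ha.trans (hreach a y)
    | cast x =>
      induction y using Fin.lastCases with
      | last => exact ((ha.trans (hreach a x)).symm).trans (SimpleGraph.Reachable.refl _)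
      | cast y => exact hreach x y
  refine ⟨hconn, ?_⟩
  -- Regularity
  intro v
  induction v using Fin.lastCases with
  | last =>
    -- neighbors of the new vertex: endpoints of edges of s
    have hNset : H.neighborSet (Fin.last n) =
        Fin.castSucc '' {b : Fin n | ∃ e ∈ s, b ∈ e} := by
      ext x
      simp only [SimpleGraph.mem_neighborSet, Set.mem_image, Set.mem_setOf_eq]
      constructor
      · intro hx
        have hxne : x ≠ Fin.last n := fun h => H.irrefl (h ▸ hx)
        obtain ⟨y, rfl⟩ := Fin.exists_castSucc_eq.mpr hxne
        exact ⟨y, adj_last.mp hx, rfl⟩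
      · rintro ⟨y, hy, rfl⟩
        exact adj_last.mpr hy
    rw [hNset, Set.ncard_image_of_injective _ (Fin.castSucc_injective n)]
    -- the set of endpoints as a finset biUnion
    classical
    have hSeq : {b : Fin n | ∃ e ∈ s, b ∈ e} =
        ↑(s.biUnion (fun e => Finset.univ.filter (· ∈ e))) := by
      ext b; simp
    rw [hSeq, Set.ncard_coe_finset]
    rw [Finset.card_biUnion]
    · have hcard2 : ∀ e ∈ s, (Finset.univ.filter (· ∈ e)).card = 2 := by
        intro e he
        induction e using Sym2.ind with
        | _ a b =>
        have hab : G.Adj a b := hsub _ he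
        have hne : a ≠ b := hab.ne
        have : Finset.univ.filter (· ∈ s(a, b)) = {a, b} := by
          ext x; simp [Sym2.mem_iff]
        rw [this, Finset.card_insert_of_notMem (by simpa using hne), Finset.card_singleton]
      rw [Finset.sum_congr rfl hcard2, Finset.sum_const, smul_eq_mul, hcard]
      omega
    · intro e he f hf hef
      simp only [Finset.disjoint_left, Finset.mem_filter]
      rintro x ⟨-, hxe⟩ ⟨-, hxf⟩
      exact hdisj e he f hf hef x hxe hxf
  | cast a =>
    -- neighbors of an old vertex
    by_cases hmem : ∃ e ∈ s, a ∈ e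
    · obtain ⟨e, he, hae⟩ := hmem
      -- e = s(a, b) for the "other" endpoint b
      obtain ⟨b, rfl⟩ : ∃ b, e = s(a, b) := ⟨Sym2.Mem.other hae, (Sym2.other_spec hae).symm⟩
      have hab : G.Adj a b := hsub _ he
      have hNset : H.neighborSet a.castSucc =
          insert (Fin.last n) (Fin.castSucc '' (G.neighborSet a \ {b})) := by
        ext x
        simp only [SimpleGraph.mem_neighborSet, Set.mem_insert_iff, Set.mem_image,
          Set.mem_diff, Set.mem_singleton_iff]
        constructor
        · intro hx
          by_cases hxlast : x = Fin.last n
          · exact Or.inl hxlast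
          · obtain ⟨y, rfl⟩ := Fin.exists_castSucc_eq.mpr hxlast
            obtain ⟨hadj, hns⟩ := adj_castSucc.mp hx
            refine Or.inr ⟨y, ⟨hadj, ?_⟩, rfl⟩
            rintro rfl
            exact hns he
        · rintro (rfl | ⟨y, ⟨hadj, hyb⟩, rfl⟩)
          · exact (adj_last.mpr ⟨s(a, b), he, by simp⟩).symm
          · refine adj_castSucc.mpr ⟨hadj, fun hs' => ?_⟩
            by_cases heq : s(a, b) = s(a, y)
            · rw [Sym2.eq_iff] at heq
              rcases heq with ⟨-, rfl⟩ | ⟨rfl, rfl⟩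
              · exact hyb rfl
              · exact G.irrefl hadj
            · exact hdisj _ he _ hs' heq a (by simp) (by simp)
      rw [hNset]
      have hbmem : b ∈ G.neighborSet a := hab
      have hfin : (Fin.castSucc '' (G.neighborSet a \ {b})).Finite := Set.toFinite _
      rw [Set.ncard_insert_of_notMem (by
        rintro ⟨y, -, hy⟩; exact castSucc_ne_last y hy) hfin,
        Set.ncard_image_of_injective _ (Fin.castSucc_injective n)]
      have := Set.ncard_diff_singleton_add_one hbmem (Set.toFinite _)
      rw [hreg a] at this
      omega
    · push_neg at hmem
      have hNset : H.neighborSet a.castSucc = Fin.castSucc '' G.neighborSet a := by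
        ext x
        simp only [SimpleGraph.mem_neighborSet, Set.mem_image]
        constructor
        · intro hx
          have hxlast : x ≠ Fin.last n := by
            rintro rfl
            obtain ⟨e', he', hae'⟩ := adj_last.mp hx.symm
            exact hmem e' he' hae'
          obtain ⟨y, rfl⟩ := Fin.exists_castSucc_eq.mpr hxlast
          exact ⟨y, (adj_castSucc.mp hx).1, rfl⟩
        · rintro ⟨y, hy, rfl⟩
          refine adj_castSucc.mpr ⟨hy, fun hs' => hmem _ hs' (by simp)⟩
      rw [hNset, Set.ncard_image_of_injective _ (Fin.castSucc_injective n), hreg a]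
end

section
/- Let k ≥ 3 be odd and let G be a connected k-regular simple graph on vertex set {1,...,n−1}. Suppose f_1,...,f_{(k−1)/2} are pairwise vertex-disjoint edges of G lying on a common path. Then the graph obtained by deleting these edges and joining a new vertex n to all k−1 endpoints of these edges is a connected graph on n vertices in which the vertex n has degree k−1 and every other vertex has degree k. -/
namespace ExtendAux

variable {n : ℕ} {G : SimpleGraph (Fin n)} {s : Finset (Sym2 (Fin n))}

lemma cs_ne_last (x : Fin n) : x.castSucc ≠ Fin.last n := (Fin.castSucc_lt_last x).ne

lemma adj_cs_cs {x y : Fin n} :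
    (extendByOne n G s).Adj x.castSucc y.castSucc ↔ G.Adj x y ∧ s(x, y) ∉ s := by
  simp only [extendByOne, SimpleGraph.fromRel_adj]
  constructor
  · rintro ⟨hne, h | h⟩
    · rcases h with ⟨x', y', hx, hy, hadj, hmem⟩ | ⟨hx, -⟩
      · obtain rfl := Fin.castSucc_injective n hx
        obtain rfl := Fin.castSucc_injective n hy
        exact ⟨hadj, hmem⟩
      · exact absurd hx (cs_ne_last x)
    · rcases h with ⟨x', y', hx, hy, hadj, hmem⟩ | ⟨hx, -⟩
      · obtain rfl := Fin.castSucc_injective n hx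
        obtain rfl := Fin.castSucc_injective n hy
        exact ⟨hadj.symm, by rwa [Sym2.eq_swap]⟩
      · exact absurd hx (cs_ne_last y)
  · rintro ⟨hadj, hmem⟩
    exact ⟨fun h => hadj.ne (Fin.castSucc_injective n h),
      Or.inl (Or.inl ⟨x, y, rfl, rfl, hadj, hmem⟩)⟩

lemma adj_last_cs {y : Fin n} :
    (extendByOne n G s).Adj (Fin.last n) y.castSucc ↔ ∃ e ∈ s, y ∈ e := by
  unfold extendByOne
  rw [SimpleGraph.fromRel_adj]
  constructor
  · rintro ⟨hne, h | h⟩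
    · rcases h with ⟨x', y', hx, -, -, -⟩ | ⟨-, y', hy, he⟩
      · exact absurd hx.symm (cs_ne_last x')
      · obtain rfl := Fin.castSucc_injective n hy
        exact he
    · rcases h with ⟨x', y', -, hy, -, -⟩ | ⟨hy, -⟩
      · exact absurd hy.symm (cs_ne_last y')
      · exact absurd hy (cs_ne_last y)
  · intro he
    exact ⟨(cs_ne_last y).symm, Or.inl (Or.inr ⟨rfl, y, rfl, he⟩)⟩

/-- Neighbor set of a castSucc vertex, when the vertex touches no edge of `s`. -/
lemma nbhd_untouched {x : Fin n} (hx : ∀ e ∈ s, x ∉ e) :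
    (extendByOne n G s).neighborSet x.castSucc = Fin.castSucc '' G.neighborSet x := by
  ext v
  constructor
  · intro hv
    have hvne : v ≠ Fin.last n := by
      rintro rfl
      obtain ⟨e, he, hxe⟩ := adj_last_cs.mp hv.symm
      exact hx e he hxe
    obtain ⟨y, rfl⟩ := Fin.exists_castSucc_eq.mpr hvne
    exact ⟨y, (adj_cs_cs.mp hv).1, rfl⟩
  · rintro ⟨y, hy, rfl⟩
    refine adj_cs_cs.mpr ⟨hy, fun hmem => ?_⟩
    exact hx _ hmem (Sym2.mem_mk_left x y)

/-- Neighbor set of a castSucc vertex that is an endpoint of an edge `s(x, y₀) ∈ s`. -/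
lemma nbhd_touched {x y₀ : Fin n} (he₀ : s(x, y₀) ∈ s)
    (hdisj : ∀ e ∈ s, ∀ f ∈ s, e ≠ f → ∀ z : Fin n, z ∈ e → z ∉ f) :
    (extendByOne n G s).neighborSet x.castSucc
      = insert (Fin.last n) (Fin.castSucc '' (G.neighborSet x \ {y₀})) := by
  ext v
  simp only [Set.mem_insert_iff, Set.mem_image, Set.mem_diff, Set.mem_singleton_iff,
    SimpleGraph.mem_neighborSet]
  constructor
  · intro hv
    by_cases hvl : v = Fin.last n
    · exact Or.inl hvl
    · obtain ⟨y, rfl⟩ := Fin.exists_castSucc_eq.mpr hvl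
      obtain ⟨hadj, hmem⟩ := adj_cs_cs.mp hv
      refine Or.inr ⟨y, ⟨hadj, fun hyy => ?_⟩, rfl⟩
      exact hmem (hyy ▸ he₀)
  · rintro (rfl | ⟨y, ⟨hadj, hyy⟩, rfl⟩)
    · exact (adj_last_cs.mpr ⟨_, he₀, Sym2.mem_mk_left x y₀⟩).symm
    · refine adj_cs_cs.mpr ⟨hadj, fun hmem => ?_⟩
      by_cases heq : s(x, y₀) = s(x, y)
      · rcases Sym2.eq_iff.mp heq with ⟨-, h⟩ | ⟨h1, -⟩
        · exact hyy h.symm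
        · exact hadj.ne' (h1 ▸ rfl)
      · exact hdisj _ he₀ _ hmem heq x (Sym2.mem_mk_left x y₀) (Sym2.mem_mk_left x y)

lemma nbhd_last :
    (extendByOne n G s).neighborSet (Fin.last n)
      = Fin.castSucc '' {y : Fin n | ∃ e ∈ s, y ∈ e} := by
  ext v
  constructor
  · intro hv
    have hadj : (extendByOne n G s).Adj (Fin.last n) v := hv
    have hvne : v ≠ Fin.last n := (hadj.ne).symm
    obtain ⟨y, rfl⟩ := Fin.exists_castSucc_eq.mpr hvne
    exact ⟨y, adj_last_cs.mp hv, rfl⟩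
  · rintro ⟨y, hy, rfl⟩
    exact adj_last_cs.mpr hy

end ExtendAux

namespace ExtendAux2
open ExtendAux

variable {n : ℕ} {G : SimpleGraph (Fin n)} {s : Finset (Sym2 (Fin n))}

/-- The endpoints of an unordered pair, as a Finset. -/
def ends (e : Sym2 (Fin n)) : Finset (Fin n) :=
  Sym2.lift ⟨fun a b => {a, b}, fun a b => by simp only []; rw [Finset.pair_comm]⟩ e

lemma mem_ends {x : Fin n} {e : Sym2 (Fin n)} : x ∈ ends e ↔ x ∈ e := by
  induction e using Sym2.ind with
  | _ a b => simp [ends]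

lemma card_ends {e : Sym2 (Fin n)} (he : ¬ e.IsDiag) : (ends e).card = 2 := by
  induction e using Sym2.ind with
  | _ a b =>
    have hab : a ≠ b := by simpa using he
    simpa [ends] using Finset.card_pair hab

lemma ncard_endpoints (hsub : ∀ e ∈ s, e ∈ G.edgeSet)
    (hdisj : ∀ e ∈ s, ∀ f ∈ s, e ≠ f → ∀ x : Fin n, x ∈ e → x ∉ f) :
    {y : Fin n | ∃ e ∈ s, y ∈ e}.ncard = 2 * s.card := by
  have hset : {y : Fin n | ∃ e ∈ s, y ∈ e} = ↑(s.biUnion ends) := by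
    ext y; simp [mem_ends]
  rw [hset, Set.ncard_coe_finset, Finset.card_biUnion, Finset.sum_congr rfl
    (fun e he => card_ends (G.not_isDiag_of_mem_edgeSet (hsub e he)))]
  · simp [Finset.sum_const, mul_comm]
  · intro e he f hf hef
    rw [Function.onFun, Finset.disjoint_left]
    intro x hx hx'
    exact hdisj e he f hf hef x (mem_ends.mp hx) (mem_ends.mp hx')

lemma reach_of_walk {x y : Fin n} (w : G.Walk x y) :
    (extendByOne n G s).Reachable x.castSucc y.castSucc := by
  induction w with
  | nil => exact SimpleGraph.Reachable.refl _
  | @cons a b c h p ih =>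
    refine SimpleGraph.Reachable.trans ?_ ih
    by_cases hm : s(a, b) ∈ s
    · have h1 : (extendByOne n G s).Adj a.castSucc (Fin.last n) :=
        (adj_last_cs.mpr ⟨_, hm, Sym2.mem_mk_left a b⟩).symm
      have h2 : (extendByOne n G s).Adj (Fin.last n) b.castSucc :=
        adj_last_cs.mpr ⟨_, hm, Sym2.mem_mk_right a b⟩
      exact h1.reachable.trans h2.reachable
    · exact (adj_cs_cs.mpr ⟨h, hm⟩).reachable

end ExtendAux2

open ExtendAux ExtendAux2 in
theorem extendByOne_connected_nearly_regular (n k : ℕ) (hk : Odd k) (hk3 : 3 ≤ k)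
    (G : SimpleGraph (Fin n)) (hc : G.Connected)
    (hreg : ∀ v, (G.neighborSet v).ncard = k)
    (s : Finset (Sym2 (Fin n))) (hcard : s.card = (k - 1) / 2)
    (hsub : ∀ e ∈ s, e ∈ G.edgeSet)
    (hdisj : ∀ e ∈ s, ∀ f ∈ s, e ≠ f → ∀ x : Fin n, x ∈ e → x ∉ f)
    (hpath : ∃ (u v : Fin n) (p : G.Walk u v), p.IsPath ∧ ∀ e ∈ s, e ∈ p.edges) :
    (extendByOne n G s).Connected ∧
      ((extendByOne n G s).neighborSet (Fin.last n)).ncard = k - 1 ∧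
      ∀ v : Fin (n + 1), v ≠ Fin.last n →
        ((extendByOne n G s).neighborSet v).ncard = k := by
  have hsne : s.Nonempty := by
    rw [← Finset.card_pos, hcard]
    omega
  refine ⟨?_, ?_, ?_⟩
  · -- connectivity
    obtain ⟨e, he⟩ := hsne
    induction e using Sym2.ind with
    | _ a b =>
      have hlast : ∀ v : Fin (n + 1), (extendByOne n G s).Reachable v (Fin.last n) := by
        intro v
        by_cases hv : v = Fin.last n
        · exact hv ▸ SimpleGraph.Reachable.refl _
        · obtain ⟨x, rfl⟩ := Fin.exists_castSucc_eq.mpr hv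
          obtain ⟨w⟩ := hc.preconnected x a
          exact (reach_of_walk w).trans
            ((adj_last_cs.mpr ⟨_, he, Sym2.mem_mk_left a b⟩).symm.reachable)
      exact SimpleGraph.Connected.mk (fun u v => (hlast u).trans (hlast v).symm)
  · -- degree of the new vertex
    rw [nbhd_last, Set.ncard_image_of_injective _ (Fin.castSucc_injective n),
      ncard_endpoints hsub hdisj, hcard]
    obtain ⟨m, rfl⟩ := hk
    omega
  · -- degrees of old vertices
    intro v hv
    obtain ⟨x, rfl⟩ := Fin.exists_castSucc_eq.mpr hv
    by_cases hx : ∃ e ∈ s, x ∈ e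
    · obtain ⟨e, he, hxe⟩ := hx
      have he' : s(x, Sym2.Mem.other hxe) ∈ s := by rw [Sym2.other_spec hxe]; exact he
      have hadj : G.Adj x (Sym2.Mem.other hxe) := by
        rw [← SimpleGraph.mem_edgeSet, Sym2.other_spec hxe]
        exact hsub e he
      have hmem : Sym2.Mem.other hxe ∈ G.neighborSet x := hadj
      have hnm : Fin.last n ∉
          Fin.castSucc '' (G.neighborSet x \ {Sym2.Mem.other hxe}) := by
        rintro ⟨y, -, hy⟩
        exact cs_ne_last y hy
      rw [nbhd_touched he' hdisj, Set.ncard_insert_of_notMem hnm,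
        Set.ncard_image_of_injective _ (Fin.castSucc_injective n),
        Set.ncard_diff_singleton_of_mem hmem, hreg]
      omega
    · push_neg at hx
      rw [nbhd_untouched hx, Set.ncard_image_of_injective _ (Fin.castSucc_injective n),
        hreg]
end
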